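/- Over {a<b<c}, for every k ≥ 1 and α, β, γ, δ, ν, ζ with k ≤ min{α, β, ζ}, the words a b^α c b^β a b^γ c b^δ a b^ν c b^ζ a and b^k a b^{α-k} c b^{β-k} a b^γ c b^{δ+k} a b^{ν+k} c b^{ζ-k} a are M-equivalent. -/
import Mathlib


open List

/-- Number of occurrences of `v` as a scattered subsequence of `w`. -/
def scount {α : Type*} [DecidableEq α] (w v : List α) : ℕ := w.sublists.count v

/-- The ternary ordered alphabet {a < b < c}. -/
inductive ABC | a | b | c
deriving DecidableEq

open ABC

/-- M-equivalence over the ordered alphabet {a < b < c}. -/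
def MEq3 (w w' : List ABC) : Prop :=
  scount w [a] = scount w' [a] ∧ scount w [b] = scount w' [b] ∧
  scount w [c] = scount w' [c] ∧ scount w [a, b] = scount w' [a, b] ∧
  scount w [b, c] = scount w' [b, c] ∧ scount w [a, b, c] = scount w' [a, b, c]

/-- Projection onto {a, c}: erase all b's. -/
def projAC (w : List ABC) : List ABC := w.filter (· ≠ b)

abbrev A (k : ℕ) : List ABC := List.replicate k a
abbrev B (k : ℕ) : List ABC := List.replicate k b
abbrev C (k : ℕ) : List ABC := List.replicate k c

section AuxLemmas

variable {σ : Type*} [DecidableEq σ]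

lemma count_flatMap_pair (e x : σ) (s : List σ) (L : List (List σ)) :
    (L.flatMap fun t => [t, e :: t]).count (x :: s) =
      L.count (x :: s) + if e = x then L.count s else 0 := by
  induction L with
  | nil => simp
  | cons t L ih =>
    simp only [flatMap_cons, count_append, ih, count_cons, count_nil, beq_iff_eq,
      List.cons.injEq]
    split_ifs <;> simp_all <;> omega

lemma count_flatMap_nil (e : σ) (L : List (List σ)) :
    (L.flatMap fun t => [t, e :: t]).count [] = L.count [] := by
  induction L with
  | nil => simp
  | cons t L ih =>
    simp only [flatMap_cons, count_append, ih, count_cons, count_nil, beq_iff_eq]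
    split_ifs <;> simp_all <;> omega

lemma scount_cons (e : σ) (w : List σ) (x : σ) (s : List σ) :
    scount (e :: w) (x :: s) = scount w (x :: s) + if e = x then scount w s else 0 := by
  unfold scount
  rw [sublists_cons, bind_eq_flatMap, count_flatMap_pair]

lemma scount_nil_pat (w : List σ) : scount w [] = 1 := by
  induction w with
  | nil => simp [scount, sublists]
  | cons e w ih =>
    unfold scount at *
    rw [sublists_cons, bind_eq_flatMap, count_flatMap_nil, ih]

lemma scount_nil_word (x : σ) (s : List σ) : scount ([] : List σ) (x :: s) = 0 := by
  simp [scount, sublists]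

lemma scount_append_one (u v : List σ) (x : σ) :
    scount (u ++ v) [x] = scount u [x] + scount v [x] := by
  induction u with
  | nil => simp [scount_nil_word]
  | cons e u ih =>
    simp only [cons_append, scount_cons, ih, scount_nil_pat]
    split_ifs <;> ring

lemma scount_append_two (u v : List σ) (x y : σ) :
    scount (u ++ v) [x, y] =
      scount u [x, y] + scount u [x] * scount v [y] + scount v [x, y] := by
  induction u with
  | nil => simp [scount_nil_word]
  | cons e u ih =>
    simp only [cons_append, scount_cons, ih, scount_append_one, scount_nil_pat]
    split_ifs <;> ring

lemma scount_append_three (u v : List σ) (x y z : σ) :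
    scount (u ++ v) [x, y, z] = scount u [x, y, z] + scount u [x, y] * scount v [z]
      + scount u [x] * scount v [y, z] + scount v [x, y, z] := by
  induction u with
  | nil => simp [scount_nil_word]
  | cons e u ih =>
    simp only [cons_append, scount_cons, ih, scount_append_one, scount_append_two,
      scount_nil_pat]
    split_ifs <;> ring

lemma scount_rep_ne {x e : σ} (h : x ≠ e) (n : ℕ) (s : List σ) :
    scount (replicate n e) (x :: s) = 0 := by
  induction n with
  | zero => simp [scount_nil_word]
  | succ n ih => simp [replicate_succ, scount_cons, ih, (Ne.symm h)]

lemma scount_rep_ne2 {y e : σ} (h : y ≠ e) (n : ℕ) (x : σ) (s : List σ) :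
    scount (replicate n e) (x :: y :: s) = 0 := by
  induction n with
  | zero => simp [scount_nil_word]
  | succ n ih =>
    simp only [replicate_succ, scount_cons, ih, scount_rep_ne h]
    simp

lemma scount_rep_single (e : σ) (n : ℕ) : scount (replicate n e) [e] = n := by
  induction n with
  | zero => simp [scount_nil_word]
  | succ n ih => simp [replicate_succ, scount_cons, ih, scount_nil_pat, Nat.add_comm]

lemma scount_single_same (e : σ) : scount [e] [e] = 1 := by
  simp [scount_cons, scount_nil_word, scount_nil_pat]

lemma scount_single_ne {e x : σ} (h : e ≠ x) : scount [e] [x] = 0 := by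
  simp [scount_cons, scount_nil_word, h]

lemma scount_single_long (e x y : σ) (s : List σ) : scount [e] (x :: y :: s) = 0 := by
  simp [scount_cons, scount_nil_word]

end AuxLemmas

theorem stmt_13 (k α β γ δ ν ζ : ℕ)
    (hk : 1 ≤ k) (hkα : k ≤ α) (hkβ : k ≤ β) (hkζ : k ≤ ζ) :
    MEq3 ([a] ++ B α ++ [c] ++ B β ++ [a] ++ B γ ++ [c] ++ B δ ++ [a] ++ B ν ++ [c] ++ B ζ ++ [a])
      (B k ++ [a] ++ B (α - k) ++ [c] ++ B (β - k) ++ [a] ++ B γ ++ [c] ++ B (δ + k) ++ [a] ++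
        B (ν + k) ++ [c] ++ B (ζ - k) ++ [a]) := by
  obtain ⟨α', rfl⟩ := Nat.exists_eq_add_of_le hkα
  obtain ⟨β', rfl⟩ := Nat.exists_eq_add_of_le hkβ
  obtain ⟨ζ', rfl⟩ := Nat.exists_eq_add_of_le hkζ
  simp only [Nat.add_sub_cancel_left]
  refine ⟨?_, ?_, ?_, ?_, ?_, ?_⟩ <;>
  · simp only [B, scount_append_three, scount_append_two, scount_append_one,
      scount_rep_single, scount_rep_ne, scount_rep_ne2, scount_single_same,
      scount_single_ne, scount_single_long, ne_eq, reduceCtorEq, not_false_eq_true]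
    try ring
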